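/- Let L be a finite graded poset of rank n, let Σ be a finite poset with a rank function such that adjoining a new minimum element 0̂ yields a finite graded poset Σ∪{0̂} of rank n+1, and let supp : Σ → L be an order-preserving, rank-preserving surjection whose extension to chains satisfies #supp^{−1}(C) = Poin_C(L;1) for every chain C in L. Then Ψ(Σ∪{0̂};a,b) = a·Ψ_pull(L;a,b), where Ψ_pull(L;a,b) = exΨ(L;1,a,b) is the pullback ab-index of L. -/

import Mathlib

open Finset
open scoped Classical

noncomputable section

/-- Words in the noncommuting letters `a`, `b`; `false` encodes `a`, `true` encodes `b`. -/
abbrev ABWord : Type := FreeMonoid Bool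

/-- Polynomials in a central (commuting) variable `y` and noncommuting variables `a`, `b`,
realized as the monoid algebra of the free monoid on `{a,b}` over `ℤ[y]`. -/
abbrev ABPoly : Type := MonoidAlgebra (Polynomial ℤ) ABWord

/-- The letter `a`. -/
def lA : ABPoly := MonoidAlgebra.single (FreeMonoid.of false) 1

/-- The letter `b`. -/
def lB : ABPoly := MonoidAlgebra.single (FreeMonoid.of true) 1

/-- The central variable `y`. -/
def lY : ABPoly := MonoidAlgebra.single 1 Polynomial.X

/-- The scalar `p ∈ ℤ[y]` inside `ABPoly`. -/
def scal (p : Polynomial ℤ) : ABPoly := MonoidAlgebra.single 1 p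

/-- The ab-word attached to `v : Fin n → Bool`. -/
def wordOf {n : ℕ} (v : Fin n → Bool) : ABWord := FreeMonoid.ofList (List.ofFn v)

/-- The ab-monomial attached to `v : Fin n → Bool`. -/
def abMono {n : ℕ} (v : Fin n → Bool) : ABPoly := MonoidAlgebra.single (wordOf v) 1

/-- The substitution ω on an ab-word: every occurrence of the factor `ab` is replaced by
`ab + y·ba + y·ab + y²·ba`, and every remaining occurrence of `a` (resp. `b`) is replaced
by `a + y·b` (resp. `b + y·a`). -/
def omegaWord : List Bool → ABPoly
  | [] => 1
  | false :: true :: l =>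
      (lA * lB + lY * (lB * lA) + lY * (lA * lB) + lY * lY * (lB * lA)) * omegaWord l
  | false :: l => (lA + lY * lB) * omegaWord l
  | true :: l => (lB + lY * lA) * omegaWord l

/-- The substitution ω, extended linearly to ab-polynomials. -/
def omegaSub (f : ABPoly) : ABPoly :=
  f.coeff.sum fun w p => scal p * omegaWord (FreeMonoid.toList w)

/-- The map ι deleting the first letter of every ab-monomial. -/
def iotaSub (f : ABPoly) : ABPoly :=
  f.coeff.sum fun w p => MonoidAlgebra.single (FreeMonoid.ofList (FreeMonoid.toList w).tail) p

/-- Evaluation of the central variable `y` at `c`. -/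
def evalY (c : ℤ) (f : ABPoly) : ABPoly :=
  f.coeff.sum fun w p => MonoidAlgebra.single w (Polynomial.C (Polynomial.eval c p))

/-- For `E ⊆ {1,…,n}`, the set `I_E` of positions where a block outside `E` ends. -/
def IE (E : Finset ℕ) (n : ℕ) : Finset ℕ :=
  (Finset.Icc 1 n).filter fun i => i ∉ E ∧ i + 1 ∈ E

/-- For `E ⊆ {1,…,n}`, the set `J_E` of positions where a block inside `E` ends. -/
def JE (E : Finset ℕ) (n : ℕ) : Finset ℕ :=
  (Finset.Icc 1 n).filter fun i => i ∈ E ∧ i + 1 ∉ E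

section Poset

variable {P : Type} [Fintype P] [PartialOrder P] [BoundedOrder P]

/-- `P` is graded of rank `n` with rank function `rk`: the bottom has rank `0`, the top has
rank `n`, and ranks increase by one along cover relations (so every maximal chain from `⊥`
to `X` has length `rk X`). -/
def GradedRank (rk : P → ℕ) (n : ℕ) : Prop :=
  rk (⊥ : P) = 0 ∧ rk (⊤ : P) = n ∧ ∀ x y : P, x ⋖ y → rk y = rk x + 1

/-- `mu` is the Möbius function of `P`. -/
def IsMoebius (mu : P → P → ℤ) : Prop :=
  (∀ x : P, mu x x = 1) ∧
    ∀ x y : P, x < y → mu x y = -∑ z ∈ univ.filter fun z => x ≤ z ∧ z < y, mu x z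

/-- `l` is a saturated chain from `x` to `y` with weakly increasing labels. -/
def RisingSatChain (lam : P → P → ℕ) (x y : P) (l : List P) : Prop :=
  l.head? = some x ∧ l.getLast? = some y ∧ List.Chain' (· ⋖ ·) l ∧
    List.Chain' (· ≤ ·) (List.zipWith lam l l.tail)

/-- `lam` is an R-labeling of `P`: it takes positive values on cover relations, and every
interval has a unique maximal (saturated) chain with weakly increasing labels. -/
def IsRLabeling (lam : P → P → ℕ) : Prop :=
  (∀ x y : P, x ⋖ y → 0 < lam x y) ∧
    ∀ x y : P, x ≤ y → ∃! l : List P, RisingSatChain lam x y l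

/-- The Poincaré polynomial `Poin(P;y) = ∑_X |μ(⊥,X)| y^{rk X}`. -/
def poinPoly (mu : P → P → ℤ) (rk : P → ℕ) : Polynomial ℤ :=
  ∑ x : P, Polynomial.C |mu ⊥ x| * Polynomial.X ^ rk x

/-- The Poincaré polynomial of the interval `[x,y]`. -/
def intervalPoin (mu : P → P → ℤ) (rk : P → ℕ) (x y : P) : Polynomial ℤ :=
  ∑ z ∈ univ.filter fun z => x ≤ z ∧ z ≤ y,
    Polynomial.C |mu x z| * Polynomial.X ^ (rk z - rk x)

/-- The successor of `x` in the chain `C` (and `⊤` if `x` is the largest element of `C`). -/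
def chainNext (C : Finset P) (x : P) : P :=
  if h : ∃ y, y ∈ C ∧ x < y ∧ ∀ z ∈ C, x < z → y ≤ z then h.choose else ⊤

/-- The chain Poincaré polynomial `Poin_C(P;y) = ∏_i Poin([C_i, C_{i+1}]; y)`, with the
convention `C_{k+1} = ⊤`. -/
def chainPoin (mu : P → P → ℤ) (rk : P → ℕ) (C : Finset P) : Polynomial ℤ :=
  ∏ x ∈ C, intervalPoin mu rk x (chainNext C x)

/-- The weight `w_lo ⋯ w_{hi-1}` of a chain `C`, where `w_i = b` if `i ∈ Rank(C)` and
`w_i = a - b` otherwise. -/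
def wtWord (rk : P → ℕ) (C : Finset P) (lo hi : ℕ) : ABPoly :=
  ((List.range' lo (hi - lo)).map fun i => if i ∈ C.image rk then lB else lA - lB).prod

/-- The Poincaré-extended ab-index
`exΨ(P;y,a,b) = ∑_{C chain in P∖{⊤}} Poin_C(P;y) · wt_C(a,b)`. -/
def exPsi (mu : P → P → ℤ) (rk : P → ℕ) (n : ℕ) : ABPoly :=
  ∑ C ∈ univ.filter fun C : Finset P => IsChain (· ≤ ·) (C : Set P) ∧ (⊤ : P) ∉ C,
    scal (chainPoin mu rk C) * wtWord rk C 0 n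

/-- Maximal chains `M₀ ⋖ M₁ ⋖ ⋯ ⋖ M_n` of `P`, encoded as functions `Fin (n+1) → P`. -/
def maxChains (n : ℕ) : Finset (Fin (n + 1) → P) :=
  univ.filter fun M =>
    M 0 = (⊥ : P) ∧ M (Fin.last n) = (⊤ : P) ∧ ∀ i : Fin n, M i.castSucc ⋖ M i.succ

/-- Entry `j` of a maximal chain (with clamping). -/
def idx {n : ℕ} (M : Fin (n + 1) → P) (j : ℕ) : P :=
  M ⟨min j n, Nat.lt_succ_of_le (min_le_right j n)⟩

/-- The ab-word `u(M) = u₁⋯u_n` of a maximal chain: `u₁ = a`, and for `i ≥ 2`, `u_i = a`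
iff `λ(M_{i-2},M_{i-1}) ≤ λ(M_{i-1},M_i)`.  Position `i` is encoded by `j = i - 1 : Fin n`. -/
def uStat (lam : P → P → ℕ) {n : ℕ} (M : Fin (n + 1) → P) (j : Fin n) : Bool :=
  if j.1 = 0 then false
  else !decide (lam (idx M (j.1 - 1)) (idx M j.1) ≤ lam (idx M j.1) (idx M (j.1 + 1)))

/-- The ab-word `u(M,E) = v₁⋯v_n`, obtained from `u(M)` by turning `a` into `b` at every
position in `E` and turning `b` into `a` at every position directly following a position
in `E`.  Position `i ∈ {1,…,n}` is encoded by `j = i - 1 : Fin n`. -/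
def uStatE (lam : P → P → ℕ) {n : ℕ} (M : Fin (n + 1) → P) (E : Finset (Fin n))
    (j : Fin n) : Bool :=
  if uStat lam M j then
    if h : 0 < j.1 then
      (if (⟨j.1 - 1, Nat.lt_of_le_of_lt (Nat.sub_le j.1 1) j.2⟩ : Fin n) ∈ E then false
       else true)
    else true
  else if j ∈ E then true else false

/-- The label of the `j`-th cover relation of a maximal chain. -/
def labSeq (lam : P → P → ℕ) {n : ℕ} (M : Fin (n + 1) → P) (j : ℕ) : ℕ :=
  lam (idx M j) (idx M (j + 1))

/-- The labels of `M` strictly decrease along positions `lo,…,hi`. -/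
def StrictDecOn (lam : P → P → ℕ) {n : ℕ} (M : Fin (n + 1) → P) (lo hi : ℕ) : Prop :=
  ∀ j : ℕ, lo ≤ j → j + 2 ≤ hi → labSeq lam M (j + 1) < labSeq lam M j

/-- The labels of `M` weakly increase along positions `lo,…,hi`. -/
def WeakIncOn (lam : P → P → ℕ) {n : ℕ} (M : Fin (n + 1) → P) (lo hi : ℕ) : Prop :=
  ∀ j : ℕ, lo ≤ j → j + 2 ≤ hi → labSeq lam M j ≤ labSeq lam M (j + 1)

/-- `(C,D)` is an interlacing pair: `C` is a chain, `D` a multichain, and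
`C₁ ≤ D₁ ≤ C₂ ≤ D₂ ≤ ⋯ ≤ C_k ≤ D_k`. -/
def Interlacing {k : ℕ} (C D : Fin k → P) : Prop :=
  StrictMono C ∧ Monotone D ∧ (∀ i, C i ≤ D i) ∧
    ∀ (i : ℕ) (h : i + 1 < k), D ⟨i, Nat.lt_of_succ_lt h⟩ ≤ C ⟨i + 1, h⟩

/-- `IRank(C,D) = {r ∈ {1,…,n} : rk C_i < r ≤ rk D_i for some i}`. -/
def IRankSet (rk : P → ℕ) (n : ℕ) {k : ℕ} (C D : Fin k → P) : Finset ℕ :=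
  (Finset.Icc 1 n).filter fun r => ∃ i, rk (C i) < r ∧ r ≤ rk (D i)

/-- `irank(C,D) = #IRank(C,D)`. -/
def irank (rk : P → ℕ) (n : ℕ) {k : ℕ} (C D : Fin k → P) : ℕ := (IRankSet rk n C D).card

/-- `IncDec(C,D)`: the maximal chains of `P` refining `C₁ ≤ D₁ ≤ ⋯ ≤ C_k ≤ D_k` whose labels
strictly decrease along every interval `[C_i, D_i]` and weakly increase along `[⊥, C₁]`,
every `[D_i, C_{i+1}]`, and `[D_k, ⊤]`. -/
def IncDecSet (lam : P → P → ℕ) (rk : P → ℕ) (n : ℕ) {k : ℕ} (C D : Fin k → P) :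
    Finset (Fin (n + 1) → P) :=
  (maxChains n).filter fun M =>
    (∀ i, ∃ j, M j = C i) ∧ (∀ i, ∃ j, M j = D i) ∧
    (∀ i, StrictDecOn lam M (rk (C i)) (rk (D i))) ∧
    ∀ i : ℕ, ∀ hik : i ≤ k,
      WeakIncOn lam M
        (if h : 0 < i then rk (D ⟨i - 1, by omega⟩) else 0)
        (if h : i < k then rk (C ⟨i, h⟩) else n)

/-- The set `A_ℓ(S)` of triples `(C,D,M)` with `(C,D)` interlacing, `Rank(C) = S`,
`irank(C,D) = ℓ`, and `M ∈ IncDec(C,D)`. -/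
def ASet (lam : P → P → ℕ) (rk : P → ℕ) (n ℓ : ℕ) (S : Finset ℕ) :
    Finset ((Fin S.card → P) × (Fin S.card → P) × (Fin (n + 1) → P)) :=
  univ.filter fun t =>
    Interlacing t.1 t.2.1 ∧ (univ.image fun i => rk (t.1 i)) = S ∧
      irank rk n t.1 t.2.1 = ℓ ∧ t.2.2 ∈ IncDecSet lam rk n t.1 t.2.1

/-- The underlying set of a chain. -/
def toFS {k : ℕ} (C : Fin k → P) : Finset P := univ.image C

/-- The underlying multiset of a multichain. -/
def toMS {k : ℕ} (C : Fin k → P) : Multiset P := Multiset.map C univ.val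

/-- The set `B_ℓ(T) = A_ℓ(T) ∖ ⋃_{S ⊊ T} φ_{S,T}(A_ℓ(S))`, where
`φ_{S,T}(C,D,M) = (C ∪ {M_r : r ∈ T∖S}, D ∪ {M_r : r ∈ T∖S}, M)`. -/
def BSet (lam : P → P → ℕ) (rk : P → ℕ) (n ℓ : ℕ) (T : Finset ℕ) :
    Finset ((Fin T.card → P) × (Fin T.card → P) × (Fin (n + 1) → P)) :=
  (ASet lam rk n ℓ T).filter fun t =>
    ¬∃ S : Finset ℕ, S ⊂ T ∧ ∃ C₀ D₀ : Fin S.card → P,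
      (C₀, D₀, t.2.2) ∈ ASet lam rk n ℓ S ∧
      toMS t.1 = toMS C₀ + Multiset.map (fun r => idx t.2.2 r) (T \ S).val ∧
      toMS t.2.1 = toMS D₀ + Multiset.map (fun r => idx t.2.2 r) (T \ S).val

/-- The set `T(M,E)` of positions `i ∈ {0,…,n-1}` with `i,i+1 ∈ E` and `u_{i+1} = a`, or
`i,i+1 ∉ E` and `u_{i+1} = b`. -/
def TME (lam : P → P → ℕ) {n : ℕ} (M : Fin (n + 1) → P) (E : Finset ℕ) : Finset ℕ :=
  (Finset.range n).filter fun i =>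
    (i ∈ E ∧ i + 1 ∈ E ∧ ∀ h : i < n, uStat lam M ⟨i, h⟩ = false) ∨
    (i ∉ E ∧ i + 1 ∉ E ∧ ∀ h : i < n, uStat lam M ⟨i, h⟩ = true)

/-- `IL_{M,E}`: interlacing pairs `(C,D)` (recorded by the underlying set of `C` and the
underlying multiset of `D`) with `IRank(C,D) = E` and `M ∈ IncDec(C,D)`. -/
def ILME (lam : P → P → ℕ) (rk : P → ℕ) (n : ℕ) (M : Fin (n + 1) → P) (E : Finset ℕ) :
    Set (Finset P × Multiset P) :=
  {p | ∃ (k : ℕ) (C D : Fin k → P), Interlacing C D ∧ p.1 = toFS C ∧ p.2 = toMS D ∧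
    IRankSet rk n C D = E ∧ M ∈ IncDecSet lam rk n C D}

/-- The chain `C_R = {M_i : i ∈ I_E ∪ R}`. -/
def CR {n : ℕ} (M : Fin (n + 1) → P) (E R : Finset ℕ) : Finset P :=
  (IE E n ∪ R).image fun r => idx M r

/-- The multichain `D_R = {{M_i : i ∈ J_E ⊔ R}}` (multiset union). -/
def DR {n : ℕ} (M : Fin (n + 1) → P) (E R : Finset ℕ) : Multiset P :=
  Multiset.map (fun r => idx M r) ((JE E n).val + R.val)

/-- The numerator polynomial
`Num(P;y,t) = ∑_{C chain in P∖{⊥,⊤}} Poin_{{⊥}∪C}(P;y) t^{#C} (1-t)^{n-1-#C}`,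
an element of `ℤ[y][t]` (outer variable `t`, inner variable `y`). -/
def NumPoly (mu : P → P → ℤ) (rk : P → ℕ) (n : ℕ) : Polynomial (Polynomial ℤ) :=
  ∑ C ∈ univ.filter fun C : Finset P =>
      IsChain (· ≤ ·) (C : Set P) ∧ (⊥ : P) ∉ C ∧ (⊤ : P) ∉ C,
    Polynomial.C (chainPoin mu rk (insert ⊥ C)) * Polynomial.X ^ C.card *
      (1 - Polynomial.X) ^ (n - 1 - C.card)

/-- The chain Poincaré polynomial of a chain given as `C : Fin k → P`. -/
def funChainPoin (mu : P → P → ℤ) (rk : P → ℕ) {k : ℕ} (C : Fin k → P) : Polynomial ℤ :=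
  ∏ i : Fin k, intervalPoin mu rk (C i) (if h : i.1 + 1 < k then C ⟨i.1 + 1, h⟩ else ⊤)

end Poset

instance {α : Type*} [Fintype α] : Fintype (WithBot α) :=
  inferInstanceAs (Fintype (Option α))


section AuxProof

open MonoidAlgebra Polynomial

/-- `evalY c` as a ring homomorphism. -/
def evalYHom (c : ℤ) : ABPoly →+* ABPoly :=
  MonoidAlgebra.liftNCRingHom
    (MonoidAlgebra.singleOneRingHom.comp
      ((Polynomial.C : ℤ →+* Polynomial ℤ).comp (Polynomial.evalRingHom c)))
    (MonoidAlgebra.of (Polynomial ℤ) ABWord)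
    (by
      intro p w
      show Commute (MonoidAlgebra.single 1 _) (MonoidAlgebra.single w 1)
      unfold Commute SemiconjBy
      rw [MonoidAlgebra.single_mul_single, MonoidAlgebra.single_mul_single]
      rw [one_mul, mul_one, one_mul, mul_one])

lemma evalYHom_single (c : ℤ) (w : ABWord) (p : Polynomial ℤ) :
    evalYHom c (MonoidAlgebra.single w p)
      = MonoidAlgebra.single w (Polynomial.C (p.eval c)) := by
  show MonoidAlgebra.liftNC _ _ _ = _
  rw [MonoidAlgebra.liftNC_single]
  show MonoidAlgebra.single 1 _ * MonoidAlgebra.single w 1 = _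
  rw [MonoidAlgebra.single_mul_single, one_mul, mul_one]
  rfl

lemma evalY_single (c : ℤ) (w : ABWord) (p : Polynomial ℤ) :
    evalY c (MonoidAlgebra.single w p)
      = MonoidAlgebra.single w (Polynomial.C (p.eval c)) := by
  unfold evalY
  rw [MonoidAlgebra.coeff_single]
  exact Finsupp.sum_single_index (by simp)

lemma evalY_eq (c : ℤ) (f : ABPoly) : evalY c f = evalYHom c f := by
  conv_rhs => rw [← MonoidAlgebra.sum_coeff_single f]
  rw [map_finsuppSum]
  unfold evalY
  exact Finsupp.sum_congr fun w _ => (evalYHom_single c w _).symm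

lemma scal_natCast (m : ℕ) : scal (Polynomial.C (m : ℤ)) = (m : ABPoly) := by
  induction m with
  | zero => simp [scal]
  | succ k ih =>
      have h1 : (Polynomial.C ((k + 1 : ℕ) : ℤ)) = (((k + 1 : ℕ) : ℕ) : Polynomial ℤ) := by
        push_cast [Polynomial.C_add, Polynomial.C_1, Polynomial.C_eq_natCast]; ring
      rw [h1]
      show MonoidAlgebra.singleOneRingHom (((k + 1 : ℕ) : ℕ) : Polynomial ℤ) = _
      rw [map_natCast]

/-- Weight word on a finite set of ranks. -/
def wtN (F : Finset ℕ) (lo len : ℕ) : ABPoly :=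
  ((List.range' lo len).map fun i => if i ∈ F then lB else lA - lB).prod

lemma wtWord_eq {P : Type} [Fintype P] [PartialOrder P] [BoundedOrder P]
    (rk : P → ℕ) (C : Finset P) (lo hi : ℕ) :
    wtWord rk C lo hi = wtN (C.image rk) lo (hi - lo) := rfl

lemma wtN_ext {F G : Finset ℕ} {lo lo' len : ℕ}
    (h : ∀ i < len, (lo + i ∈ F ↔ lo' + i ∈ G)) : wtN F lo len = wtN G lo' len := by
  unfold wtN
  rw [List.range'_eq_map_range, List.range'_eq_map_range, List.map_map, List.map_map]
  congr 1
  apply List.map_congr_left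
  intro i hi
  simp only [Function.comp_apply]
  rw [List.mem_range] at hi
  by_cases hF : lo + i ∈ F
  · rw [if_pos hF, if_pos ((h i hi).1 hF)]
  · rw [if_neg hF, if_neg (fun hG => hF ((h i hi).2 hG))]

lemma wtN_zero (F : Finset ℕ) (lo : ℕ) : wtN F lo 0 = 1 := rfl

lemma wtN_succ (F : Finset ℕ) (lo len : ℕ) :
    wtN F lo (len + 1) = (if lo ∈ F then lB else lA - lB) * wtN F (lo + 1) len := by
  unfold wtN
  rw [List.range'_succ, List.map_cons, List.prod_cons]

lemma evalY_wtN (c : ℤ) (F : Finset ℕ) (lo len : ℕ) :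
    evalY c (wtN F lo len) = wtN F lo len := by
  induction len generalizing lo with
  | zero => rw [wtN_zero, evalY_eq, map_one]
  | succ k ih =>
      rw [wtN_succ, evalY_eq, map_mul, ← evalY_eq, ← evalY_eq, ih]
      congr 1
      by_cases h : lo ∈ F
      · rw [if_pos h]
        show evalY c (MonoidAlgebra.single _ 1) = _
        rw [evalY_single]; simp [lB]
      · rw [if_neg h, evalY_eq, map_sub, ← evalY_eq, ← evalY_eq]
        show evalY c (MonoidAlgebra.single _ 1) - evalY c (MonoidAlgebra.single _ 1) = _
        rw [evalY_single, evalY_single]; simp [lA, lB]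

lemma evalY_scal_mul_wtN (c : ℤ) (p : Polynomial ℤ) (F : Finset ℕ) (lo len : ℕ) :
    evalY c (scal p * wtN F lo len)
      = scal (Polynomial.C (p.eval c)) * wtN F lo len := by
  rw [evalY_eq, map_mul, ← evalY_eq, ← evalY_eq, evalY_wtN]
  congr 1
  show evalY c (MonoidAlgebra.single 1 p) = _
  rw [evalY_single]; rfl

section GradedAux

variable {P : Type} [Fintype P] [PartialOrder P] [BoundedOrder P] {rk : P → ℕ}
  {mu : P → P → ℤ} {n : ℕ}

lemma GradedRank.rk_lt_rk (h : GradedRank rk n) :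
    ∀ y x : P, x < y → rk x < rk y := by
  intro y
  induction y using WellFoundedLT.induction with
  | _ y IH =>
    intro x hxy
    obtain ⟨z, hz, hmax⟩ := Finset.exists_maximal
      (s := (Finset.univ : Finset P).filter fun z => x ≤ z ∧ z < y)
      ⟨x, by simp [hxy]⟩
    simp only [Finset.mem_filter, Finset.mem_univ, true_and] at hz
    have hcov : z ⋖ y := by
      refine ⟨hz.2, fun w hzw hwy => not_lt_of_ge (hmax ?_ hzw.le) hzw⟩
      simp only [Finset.mem_filter, Finset.mem_univ, true_and]
      exact ⟨hz.1.trans hzw.le, hwy⟩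
    have hrky := h.2.2 z y hcov
    rcases eq_or_lt_of_le hz.1 with rfl | hxz
    · omega
    · have := IH z hz.2 x hxz; omega

lemma GradedRank.eq_top_of_rk (h : GradedRank rk n) {x : P} (hx : rk x = n) :
    x = ⊤ := by
  by_contra hne
  have hlt := h.rk_lt_rk ⊤ x (lt_top_iff_ne_top.mpr hne)
  have h2 := h.2.1
  omega

lemma le_chainNext (C : Finset P) (x : P) : x ≤ chainNext C x := by
  rw [chainNext]
  split
  · rename_i hh; exact le_of_lt hh.choose_spec.2.1
  · exact le_top

lemma intervalPoin_eval_zero (hg : GradedRank rk n) (hmu : IsMoebius mu)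
    {x y : P} (hxy : x ≤ y) : (intervalPoin mu rk x y).eval 0 = 1 := by
  unfold intervalPoin
  rw [Polynomial.eval_finset_sum]
  rw [Finset.sum_eq_single x]
  · simp [hmu.1 x]
  · intro z hz hne
    simp only [Finset.mem_filter, Finset.mem_univ, true_and] at hz
    have hxz : x < z := lt_of_le_of_ne hz.1 (Ne.symm hne)
    have hrk := hg.rk_lt_rk z x hxz
    rw [Polynomial.eval_mul, Polynomial.eval_pow, Polynomial.eval_X,
      zero_pow (by omega : rk z - rk x ≠ 0), mul_zero]
  · intro hx
    exact absurd (by simp [hxy] : x ∈ _) hx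

lemma chainPoin_eval_zero (hg : GradedRank rk n) (hmu : IsMoebius mu)
    (C : Finset P) : (chainPoin mu rk C).eval 0 = 1 := by
  unfold chainPoin
  rw [Polynomial.eval_prod]
  exact Finset.prod_eq_one fun x _ =>
    intervalPoin_eval_zero hg hmu (le_chainNext C x)

end GradedAux

/-- The chains of `P` avoiding `⊤`, elaborated in the same generic context as `exPsi`. -/
def chainsNoTop (P : Type) [Fintype P] [PartialOrder P] [OrderTop P] :
    Finset (Finset P) :=
  univ.filter fun C : Finset P => IsChain (· ≤ ·) (C : Set P) ∧ (⊤ : P) ∉ C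

lemma exPsi_eq_chainsNoTop {P : Type} [Fintype P] [PartialOrder P] [BoundedOrder P]
    (mu : P → P → ℤ) (rk : P → ℕ) (n : ℕ) :
    exPsi mu rk n = ∑ C ∈ chainsNoTop P, scal (chainPoin mu rk C) * wtWord rk C 0 n := rfl

lemma mem_chainsNoTop {P : Type} [Fintype P] [PartialOrder P] [OrderTop P]
    {D : Finset P} :
    D ∈ chainsNoTop P ↔ IsChain (· ≤ ·) (D : Set P) ∧ (⊤ : P) ∉ D := by
  unfold chainsNoTop
  rw [Finset.mem_filter]
  simp

end AuxProof

theorem statement10 {L S : Type} [Fintype L] [PartialOrder L] [BoundedOrder L]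
    [Fintype S] [PartialOrder S] [OrderTop S]
    (n : ℕ) (rkL : L → ℕ) (muL : L → L → ℤ) (rkS : S → ℕ)
    (muS : WithBot S → WithBot S → ℤ) (supp : S → L)
    (hgradeL : GradedRank rkL n)
    (hgradeS : GradedRank
      (fun x : WithBot S => WithBot.recBotCoe 0 (fun s => rkS s + 1) x) (n + 1))
    (hmuL : IsMoebius muL) (hmuS : IsMoebius muS)
    (hmono : Monotone supp) (hrank : ∀ s, rkL (supp s) = rkS s)
    (hsurj : Function.Surjective supp)
    (hfiber : ∀ C : Finset L, IsChain (· ≤ ·) (C : Set L) →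
      ((univ.filter fun D : Finset S =>
          IsChain (· ≤ ·) (D : Set S) ∧ D.image supp = C).card : ℤ) =
        (chainPoin muL rkL C).eval 1) :
    evalY 0 (exPsi muS (fun x : WithBot S => WithBot.recBotCoe 0 (fun s => rkS s + 1) x)
        (n + 1)) =
      lA * evalY 1 (exPsi muL rkL n) := by
  set rkW : WithBot S → ℕ := fun x : WithBot S => WithBot.recBotCoe 0 (fun s => rkS s + 1) x
    with hrkWdef
  have hrkW_bot : rkW (⊥ : WithBot S) = 0 := rfl
  have hrkW_coe : ∀ s : S, rkW ((s : S) : WithBot S) = rkS s + 1 := fun s => rfl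
  have htopW : (⊤ : WithBot S) = (((⊤ : S) : S) : WithBot S) := rfl
  have hrkS_top : rkS (⊤ : S) = n := by
    have h1 := hgradeS.2.1
    rw [htopW, hrkW_coe] at h1
    omega
  have hStop : ∀ s : S, rkS s = n → s = (⊤ : S) := by
    intro s hs
    have h1 : ((s : S) : WithBot S) = ⊤ := hgradeS.eq_top_of_rk (by rw [hrkW_coe, hs])
    rw [htopW] at h1
    exact WithBot.coe_injective h1
  have hsupp_top : supp (⊤ : S) = (⊤ : L) :=
    hgradeL.eq_top_of_rk (by rw [hrank, hrkS_top])
  have hsupp_top' : ∀ s : S, supp s = (⊤ : L) → s = (⊤ : S) := by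
    intro s h
    apply hStop
    have h2 := hrank s
    rw [h, hgradeL.2.1] at h2
    omega
  -- the common right-hand sum
  set BIG : ABPoly := ∑ C ∈ chainsNoTop L,
    ((univ.filter fun D' : Finset S =>
        IsChain (· ≤ ·) (D' : Set S) ∧ D'.image supp = C).card) •
      wtN (C.image rkL) 0 n with hBIG
  have hstep2 : evalY 1 (exPsi muL rkL n) = BIG := by
    rw [hBIG, exPsi_eq_chainsNoTop, evalY_eq, map_sum]
    apply Finset.sum_congr rfl
    intro C hC
    rw [mem_chainsNoTop] at hC
    rw [← evalY_eq, wtWord_eq, Nat.sub_zero, evalY_scal_mul_wtN, ← hfiber C hC.1,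
      scal_natCast, nsmul_eq_mul]
  have hstep : evalY 0 (exPsi muS rkW (n + 1)) = lA * BIG := by
    rw [hBIG, exPsi_eq_chainsNoTop, evalY_eq, map_sum]
    have e1 : ∀ D ∈ chainsNoTop (WithBot S),
        evalYHom 0 (scal (chainPoin muS rkW D) * wtWord rkW D 0 (n + 1))
          = wtN (D.image rkW) 0 (n + 1) := by
      intro D _
      rw [← evalY_eq, wtWord_eq, Nat.sub_zero, evalY_scal_mul_wtN,
        chainPoin_eval_zero hgradeS hmuS, Polynomial.C_1]
      have hone : scal (1 : Polynomial ℤ) = 1 := MonoidAlgebra.one_def.symm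
      rw [hone, one_mul]
    refine (Finset.sum_congr rfl e1).trans ?_
    rw [← Finset.sum_filter_add_sum_filter_not (chainsNoTop (WithBot S))
      (fun D => (⊥ : WithBot S) ∉ D) (fun D => wtN (D.image rkW) 0 (n + 1))]
    -- reindex the sum over chains containing ⊥
    have e2 : ∑ D ∈ ((chainsNoTop (WithBot S)).filter fun D => ¬ (⊥ : WithBot S) ∉ D),
        wtN (D.image rkW) 0 (n + 1)
        = ∑ D ∈ ((chainsNoTop (WithBot S)).filter fun D => (⊥ : WithBot S) ∉ D),
          wtN ((insert ⊥ D).image rkW) 0 (n + 1) := by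
      refine Finset.sum_bij' (fun D _ => D.erase ⊥) (fun D _ => insert ⊥ D) ?_ ?_ ?_ ?_ ?_
      · intro D hD
        simp only [Finset.mem_filter, mem_chainsNoTop, not_not] at hD ⊢
        refine ⟨⟨hD.1.1.mono ?_, fun h => hD.1.2 (Finset.mem_of_mem_erase h)⟩,
          Finset.notMem_erase _ _⟩
        rw [Finset.coe_erase]
        exact Set.diff_subset
      · intro D hD
        simp only [Finset.mem_filter, mem_chainsNoTop, not_not] at hD ⊢
        refine ⟨⟨?_, ?_⟩, Finset.mem_insert_self _ _⟩
        · rw [Finset.coe_insert]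
          exact hD.1.1.insert fun b _ _ => Or.inl bot_le
        · intro h
          rcases Finset.mem_insert.mp h with h | h
          · exact absurd (htopW.symm.trans h) WithBot.coe_ne_bot
          · exact hD.1.2 h
      · intro D hD
        simp only [Finset.mem_filter, not_not] at hD
        exact Finset.insert_erase hD.2
      · intro D hD
        simp only [Finset.mem_filter] at hD
        exact Finset.erase_insert hD.2
      · intro D hD
        simp only [Finset.mem_filter, not_not] at hD
        rw [Finset.insert_erase hD.2]
    rw [e2, ← Finset.sum_add_distrib]
    -- each pair contributes lA times the truncated weight
    have e3 : ∀ D ∈ ((chainsNoTop (WithBot S)).filter fun D => (⊥ : WithBot S) ∉ D),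
        wtN (D.image rkW) 0 (n + 1) + wtN ((insert ⊥ D).image rkW) 0 (n + 1)
          = lA * wtN (D.image rkW) 1 n := by
      intro D hD
      simp only [Finset.mem_filter, mem_chainsNoTop] at hD
      obtain ⟨⟨hchain, htop⟩, hbot⟩ := hD
      have h0 : 0 ∉ D.image rkW := by
        intro h
        obtain ⟨x, hx, hx0⟩ := Finset.mem_image.mp h
        induction x using WithBot.recBotCoe with
        | bot => exact hbot hx
        | coe s => rw [hrkW_coe] at hx0; omega
      have himg : (insert ⊥ D).image rkW = insert 0 (D.image rkW) := by
        rw [Finset.image_insert, hrkW_bot]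
      rw [himg, wtN_succ (D.image rkW) 0 n, wtN_succ (insert 0 (D.image rkW)) 0 n,
        if_neg h0, if_pos (Finset.mem_insert_self 0 _)]
      have htail : wtN (insert 0 (D.image rkW)) (0 + 1) n = wtN (D.image rkW) (0 + 1) n := by
        apply wtN_ext
        intro i _
        simp only [Finset.mem_insert]
        constructor
        · rintro (h | h)
          · omega
          · exact h
        · exact Or.inr
      rw [htail, ← add_mul, sub_add_cancel]
    rw [Finset.sum_congr rfl e3, ← Finset.mul_sum]
    congr 1
    -- reindex to chains in S
    have hIP : ∀ D : Finset (WithBot S), (⊥ : WithBot S) ∉ D →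
        ((D.preimage ((↑·) : S → WithBot S) (WithBot.coe_injective.injOn)).image
          ((↑·) : S → WithBot S)) = D := by
      intro D hbot
      ext x
      simp only [Finset.mem_image, Finset.mem_preimage]
      constructor
      · rintro ⟨s, hs, rfl⟩; exact hs
      · intro hx
        induction x using WithBot.recBotCoe with
        | bot => exact absurd hx hbot
        | coe s => exact ⟨s, hx, rfl⟩
    have e4 : ∑ D ∈ ((chainsNoTop (WithBot S)).filter fun D => (⊥ : WithBot S) ∉ D),
        wtN (D.image rkW) 1 n
        = ∑ D' ∈ chainsNoTop S, wtN (D'.image fun s => rkS s + 1) 1 n := by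
      refine Finset.sum_bij'
        (fun D _ => D.preimage ((↑·) : S → WithBot S) (WithBot.coe_injective.injOn))
        (fun D' _ => D'.image ((↑·) : S → WithBot S)) ?_ ?_ ?_ ?_ ?_
      · intro D hD
        simp only [Finset.mem_filter, mem_chainsNoTop] at hD
        rw [mem_chainsNoTop]
        constructor
        · intro a ha b hb hab
          rw [Finset.mem_coe, Finset.mem_preimage] at ha hb
          have := hD.1.1 (Finset.mem_coe.mpr ha) (Finset.mem_coe.mpr hb)
            (fun h => hab (WithBot.coe_injective h))
          rcases this with h | h
          · exact Or.inl (WithBot.coe_le_coe.mp h)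
          · exact Or.inr (WithBot.coe_le_coe.mp h)
        · intro h
          rw [Finset.mem_preimage, ← htopW] at h
          exact hD.1.2 h
      · intro D' hD'
        rw [mem_chainsNoTop] at hD'
        simp only [Finset.mem_filter, mem_chainsNoTop]
        refine ⟨⟨?_, ?_⟩, ?_⟩
        · rw [Finset.coe_image]
          exact hD'.1.image_of_map_rel _ _ _ (fun x y h => WithBot.coe_le_coe.mpr h)
        · intro h
          obtain ⟨s, hs, hcoe⟩ := Finset.mem_image.mp h
          rw [htopW] at hcoe
          exact hD'.2 ((WithBot.coe_injective hcoe) ▸ hs)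
        · intro h
          obtain ⟨s, _, hcoe⟩ := Finset.mem_image.mp h
          exact WithBot.coe_ne_bot hcoe
      · intro D hD
        simp only [Finset.mem_filter] at hD
        exact hIP D hD.2
      · intro D' _
        ext s
        simp only [Finset.mem_preimage, Finset.mem_image]
        constructor
        · rintro ⟨t, ht, hts⟩
          exact (WithBot.coe_injective hts) ▸ ht
        · intro hs; exact ⟨s, hs, rfl⟩
      · intro D hD
        simp only [Finset.mem_filter] at hD
        conv_lhs => rw [← hIP D hD.2]
        rw [Finset.image_image]
        congr 1
    rw [e4]
    -- group the chains of S according to their support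
    have hmaps : ∀ D' ∈ chainsNoTop S, D'.image supp ∈ chainsNoTop L := by
      intro D' hD'
      rw [mem_chainsNoTop] at hD' ⊢
      constructor
      · rw [Finset.coe_image]
        exact hD'.1.image_of_map_rel _ _ _ (fun x y h => hmono h)
      · intro h
        obtain ⟨s, hs, hsl⟩ := Finset.mem_image.mp h
        exact hD'.2 ((hsupp_top' s hsl) ▸ hs)
    rw [← Finset.sum_fiberwise_of_maps_to hmaps
      (fun D' => wtN (D'.image fun s => rkS s + 1) 1 n)]
    apply Finset.sum_congr rfl
    intro C hC
    rw [mem_chainsNoTop] at hC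
    have hwt : ∀ D' ∈ (chainsNoTop S).filter fun D' => D'.image supp = C,
        wtN (D'.image fun s => rkS s + 1) 1 n = wtN (C.image rkL) 0 n := by
      intro D' hD'
      simp only [Finset.mem_filter] at hD'
      apply wtN_ext
      intro i _
      rw [← hD'.2, Finset.image_image]
      simp only [Finset.mem_image, Function.comp_apply]
      constructor
      · rintro ⟨s, hs, hrs⟩
        exact ⟨s, hs, by rw [hrank]; omega⟩
      · rintro ⟨s, hs, hrs⟩
        refine ⟨s, hs, ?_⟩
        rw [hrank s] at hrs
        omega
    rw [Finset.sum_congr rfl hwt, Finset.sum_const]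
    congr 2
    ext D'
    simp only [Finset.mem_filter, mem_chainsNoTop, Finset.mem_univ, true_and]
    constructor
    · rintro ⟨⟨h1, _⟩, h3⟩; exact ⟨h1, h3⟩
    · rintro ⟨h1, h3⟩
      refine ⟨⟨h1, fun htp => ?_⟩, h3⟩
      apply hC.2
      rw [← h3]
      exact Finset.mem_image.mpr ⟨⊤, htp, hsupp_top⟩
  rw [hstep, hstep2]
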